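/- Let U, V be separable Hilbert spaces, α ∈ (0,1/2), and let S(t) be a C₀-semigroup on V with Φ ∈ L(U,V) such that S(r)Φ is Hilbert–Schmidt for r > 0 and ∫_0^∞ ‖S(r)Φ‖_{HS}^{2/(1+2α)} dr < ∞. Then for every T > 0, ∫_0^T ∫_0^T ‖S(u)Φ‖_{HS} ‖S(v)Φ‖_{HS} |u-v|^{2α-1} du dv < ∞. -/

import Mathlib

open MeasureTheory Set
open scoped ENNReal NNReal

lemma amgm_aux (a b c : ℝ) (hc : 0 < c) : a * b ≤ (a^2*c + b^2*c⁻¹)/2 := by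
  have h1 : 0 ≤ (a*c - b)^2 * c⁻¹ := mul_nonneg (sq_nonneg _) (inv_nonneg.2 hc.le)
  have h2 : (a*c - b)^2 * c⁻¹ = a^2*c + b^2*c⁻¹ - 2*(a*b) := by
    field_simp
    ring
  linarith

lemma int_Ioc_rpow_aux {β : ℝ} (hβ : -1 < β) {c : ℝ} (hc : 0 ≤ c) :
    ∫ v in Set.Ioc (0:ℝ) c, v ^ β = c^(β+1)/(β+1) := by
  rw [← intervalIntegral.integral_of_le hc, integral_rpow (Or.inl hβ),
    Real.zero_rpow (by linarith), sub_zero]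

lemma lint_Ioc_rpow_aux {β : ℝ} (hβ : -1 < β) {c : ℝ} (hc : 0 ≤ c) :
    ∫⁻ v in Set.Ioc (0:ℝ) c, ENNReal.ofReal (v ^ β) = ENNReal.ofReal (c^(β+1)/(β+1)) := by
  rw [← ofReal_integral_eq_lintegral_ofReal
    ((intervalIntegrable_iff_integrableOn_Ioc_of_le hc).mp (intervalIntegral.intervalIntegrable_rpow' hβ))
    (by filter_upwards [ae_restrict_mem measurableSet_Ioc] with v hv
        exact Real.rpow_nonneg hv.1.le _),
    int_Ioc_rpow_aux hβ hc]
lemma hB1_aux (hα : 0 < α) (hαh : α < 1/2) (hu : 0 < u) :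
    ∫⁻ v in Ioc (u/2) u, ENNReal.ofReal (|u - v| ^ (2*α-1)) =
      ENNReal.ofReal ((u/2)^(2*α)/(2*α)) := by
  have hβ : (-1:ℝ) < 2*α-1 := by linarith
  have hu2 : 0 < u/2 := by linarith
  have h1 := (intervalIntegral.intervalIntegrable_rpow' (r := 2*α-1) hβ (a := u/2) (b := 0)).comp_sub_left u
  rw [show u - u/2 = u/2 by ring, sub_zero] at h1
  have hInt := (intervalIntegrable_iff_integrableOn_Ioc_of_le (by linarith)).mp h1
  have hcongr : ∫⁻ v in Ioc (u/2) u, ENNReal.ofReal (|u - v| ^ (2*α-1)) =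
      ∫⁻ v in Ioc (u/2) u, ENNReal.ofReal ((u - v) ^ (2*α-1)) := by
    apply setLIntegral_congr_fun measurableSet_Ioc
    intro v hv
    dsimp only
    rw [abs_of_nonneg (by linarith [hv.2] : (0:ℝ) ≤ u - v)]
  rw [hcongr, ← ofReal_integral_eq_lintegral_ofReal hInt
    (by filter_upwards [ae_restrict_mem measurableSet_Ioc] with v hv
        exact Real.rpow_nonneg (by linarith [hv.2]) _)]
  congr 1
  rw [← intervalIntegral.integral_of_le (by linarith : u/2 ≤ u),
    intervalIntegral.integral_comp_sub_left (fun x => x ^ (2*α-1)) u,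
    sub_self, show u - u/2 = u/2 by ring,
    integral_rpow (Or.inl hβ), Real.zero_rpow (by linarith), sub_zero]
  norm_num

lemma hB2_aux (hα : 0 < α) (hαh : α < 1/2) (hu : 0 < u) :
    ∫⁻ v in Ioc u (2*u), ENNReal.ofReal (|u - v| ^ (2*α-1)) =
      ENNReal.ofReal (u^(2*α)/(2*α)) := by
  have hβ : (-1:ℝ) < 2*α-1 := by linarith
  have h1 := (intervalIntegral.intervalIntegrable_rpow' (r := 2*α-1) hβ (a := 0) (b := u)).comp_sub_right u
  rw [zero_add, show u + u = 2*u by ring] at h1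
  have hInt := (intervalIntegrable_iff_integrableOn_Ioc_of_le (by linarith)).mp h1
  have hcongr : ∫⁻ v in Ioc u (2*u), ENNReal.ofReal (|u - v| ^ (2*α-1)) =
      ∫⁻ v in Ioc u (2*u), ENNReal.ofReal ((v - u) ^ (2*α-1)) := by
    apply setLIntegral_congr_fun measurableSet_Ioc
    intro v hv
    dsimp only
    rw [abs_sub_comm, abs_of_nonneg (by linarith [hv.1] : (0:ℝ) ≤ v - u)]
  rw [hcongr, ← ofReal_integral_eq_lintegral_ofReal hInt
    (by filter_upwards [ae_restrict_mem measurableSet_Ioc] with v hv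
        exact Real.rpow_nonneg (by linarith [hv.1]) _)]
  congr 1
  rw [← intervalIntegral.integral_of_le (by linarith : u ≤ 2*u),
    intervalIntegral.integral_comp_sub_right (fun x => x ^ (2*α-1)) u,
    sub_self, show 2*u - u = u by ring,
    integral_rpow (Or.inl hβ), Real.zero_rpow (by linarith), sub_zero]
  norm_num

lemma hB_aux {α γ u : ℝ} (hα : 0 < α) (hγl : 2*α < γ) (hγu : γ < 1) (hu : 0 < u)
    (hB1 : ∫⁻ v in Ioc (u/2) u, ENNReal.ofReal (|u - v| ^ (2*α-1)) =
      ENNReal.ofReal ((u/2)^(2*α)/(2*α)))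
    (hB2 : ∫⁻ v in Ioc u (2*u), ENNReal.ofReal (|u - v| ^ (2*α-1)) =
      ENNReal.ofReal (u^(2*α)/(2*α))) :
    ∫⁻ v in Ioc (u/2) (2*u), ENNReal.ofReal (v ^ (-γ) * |u - v| ^ (2*α-1)) ≤
      ENNReal.ofReal (((1:ℝ)/2) ^ (-γ) / α * u ^ (2*α-γ)) := by
  have hu2 : 0 < u/2 := by linarith
  have step1 : ∫⁻ v in Ioc (u/2) (2*u), ENNReal.ofReal (v ^ (-γ) * |u - v| ^ (2*α-1)) ≤
      ∫⁻ v in Ioc (u/2) (2*u), ENNReal.ofReal ((u/2) ^ (-γ)) * ENNReal.ofReal (|u - v| ^ (2*α-1)) := by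
    apply lintegral_mono_ae
    filter_upwards [ae_restrict_mem measurableSet_Ioc] with v hv
    rw [← ENNReal.ofReal_mul (Real.rpow_nonneg hu2.le _)]
    apply ENNReal.ofReal_le_ofReal
    exact mul_le_mul_of_nonneg_right
      (Real.rpow_le_rpow_of_nonpos hu2 hv.1.le (by linarith))
      (Real.rpow_nonneg (abs_nonneg _) _)
  rw [lintegral_const_mul' _ _ ENNReal.ofReal_ne_top] at step1
  have hsplit : ∫⁻ v in Ioc (u/2) (2*u), ENNReal.ofReal (|u - v| ^ (2*α-1)) ≤
      ENNReal.ofReal ((u/2)^(2*α)/(2*α)) + ENNReal.ofReal (u^(2*α)/(2*α)) := by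
    rw [← hB1, ← hB2]
    refine (lintegral_mono_set ?_).trans (lintegral_union_le _ _ _)
    intro v hv
    rcases le_or_gt v u with h | h
    · exact Or.inl ⟨hv.1, h⟩
    · exact Or.inr ⟨h, hv.2⟩
  refine step1.trans ((mul_le_mul_right hsplit _).trans ?_)
  rw [← ENNReal.ofReal_add (by positivity) (by positivity),
    ← ENNReal.ofReal_mul (Real.rpow_nonneg hu2.le _)]
  apply ENNReal.ofReal_le_ofReal
  have l1 : (u/2)^(2*α) ≤ u^(2*α) := Real.rpow_le_rpow hu2.le (by linarith) (by linarith)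
  have l2 : (u/2)^(-γ) = ((1:ℝ)/2)^(-γ) * u^(-γ) := by
    rw [show u/2 = (1/2)*u by ring, Real.mul_rpow (by norm_num) hu.le]
  have l3 : u^(-γ) * u^(2*α) = u^(2*α-γ) := by
    rw [← Real.rpow_add hu]; ring_nf
  calc (u/2)^(-γ) * ((u/2)^(2*α)/(2*α) + u^(2*α)/(2*α))
      ≤ (u/2)^(-γ) * (u^(2*α)/α) := by
        apply mul_le_mul_of_nonneg_left ?_ (Real.rpow_nonneg hu2.le _)
        calc (u/2)^(2*α)/(2*α) + u^(2*α)/(2*α) = ((u/2)^(2*α) + u^(2*α))/(2*α) := by ring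
        _ ≤ (u^(2*α) + u^(2*α))/(2*α) := by
            apply (div_le_div_iff_of_pos_right (by linarith)).mpr; linarith
        _ = u^(2*α)/α := by ring
    _ = ((1:ℝ)/2) ^ (-γ) / α * u ^ (2*α-γ) := by
        rw [l2, show (1/2:ℝ)^(-γ) * u^(-γ) * (u^(2*α)/α)
            = (1/2:ℝ)^(-γ)/α * (u^(-γ) * u^(2*α)) by ring, l3]
lemma hC_aux {α γ u : ℝ} (hα : 0 < α) (hαh : α < 1/2) (hγl : 2*α < γ) (hu : 0 < u) :
    ∫⁻ v in Ioi (2*u), ENNReal.ofReal (v ^ (-γ) * |u - v| ^ (2*α-1)) ≤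
      ENNReal.ofReal ((2:ℝ)^(1-2*α) * (2:ℝ)^(2*α-γ) / (γ-2*α) * u ^ (2*α-γ)) := by
  have hβ0 : 2*α - 1 ≤ 0 := by linarith
  have step1 : ∫⁻ v in Ioi (2*u), ENNReal.ofReal (v ^ (-γ) * |u - v| ^ (2*α-1)) ≤
      ∫⁻ v in Ioi (2*u), ENNReal.ofReal ((2:ℝ)^(1-2*α)) * ENNReal.ofReal (v ^ (2*α-1-γ)) := by
    apply lintegral_mono_ae
    filter_upwards [ae_restrict_mem measurableSet_Ioi] with v hv
    have hv' : 2*u < v := hv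
    have hv0 : 0 < v := by linarith
    rw [← ENNReal.ofReal_mul (by positivity)]
    apply ENNReal.ofReal_le_ofReal
    have h1 : |u - v| = v - u := by
      rw [abs_sub_comm]; exact abs_of_pos (by linarith)
    have h2 : |u - v| ^ (2*α-1) ≤ (v/2) ^ (2*α-1) := by
      rw [h1]
      exact Real.rpow_le_rpow_of_nonpos (by linarith) (by linarith) hβ0
    have h3 : (v/2) ^ (2*α-1) = (2:ℝ)^(1-2*α) * v^(2*α-1) := by
      rw [show v/2 = (1/2)*v by ring, Real.mul_rpow (by norm_num) hv0.le,
        one_div, Real.inv_rpow (by norm_num : (0:ℝ) ≤ 2),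
        ← Real.rpow_neg (by norm_num : (0:ℝ) ≤ 2), show -(2*α-1) = 1-2*α by ring]
    calc v ^ (-γ) * |u - v| ^ (2*α-1) ≤ v ^ (-γ) * ((2:ℝ)^(1-2*α) * v^(2*α-1)) := by
          rw [← h3]
          exact mul_le_mul_of_nonneg_left h2 (Real.rpow_nonneg hv0.le _)
      _ = (2:ℝ)^(1-2*α) * (v^(-γ) * v^(2*α-1)) := by ring
      _ = (2:ℝ)^(1-2*α) * v^(2*α-1-γ) := by
          rw [← Real.rpow_add hv0]; ring_nf
  rw [lintegral_const_mul' _ _ ENNReal.ofReal_ne_top] at step1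
  have hval : ∫⁻ v in Ioi (2*u), ENNReal.ofReal (v ^ (2*α-1-γ)) =
      ENNReal.ofReal (-(2*u)^(2*α-1-γ+1)/(2*α-1-γ+1)) := by
    rw [← ofReal_integral_eq_lintegral_ofReal
      (integrableOn_Ioi_rpow_of_lt (by linarith) (by linarith))
      (by filter_upwards [ae_restrict_mem measurableSet_Ioi] with v hv
          exact Real.rpow_nonneg (by linarith [mem_Ioi.mp hv]) _),
      integral_Ioi_rpow_of_lt (by linarith) (by linarith)]
  rw [hval] at step1
  refine step1.trans ?_
  rw [← ENNReal.ofReal_mul (by positivity)]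
  apply ENNReal.ofReal_le_ofReal
  apply le_of_eq
  have e1 : 2*α-1-γ+1 = 2*α-γ := by ring
  rw [e1, show (2*u:ℝ) = 2*u from rfl]
  rw [show -(2*u)^(2*α-γ)/(2*α-γ) = (2*u)^(2*α-γ)/(γ-2*α) by rw [div_eq_div_iff (by linarith) (by linarith)]; ring]
  rw [Real.mul_rpow (by norm_num) hu.le]
  ring

lemma kernel_aux (α γ T u : ℝ) (hα : 0 < α) (hαh : α < 1/2) (hγl : 2*α < γ) (hγu : γ < 1)
    (hu : 0 < u) :
    ∫⁻ v in Set.Ioc (0:ℝ) T, ENNReal.ofReal (v ^ (-γ) * |u - v| ^ (2*α - 1)) ≤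
      ENNReal.ofReal ((((1:ℝ)/2) ^ (2*α-γ) / (1-γ) + ((1:ℝ)/2) ^ (-γ) / α
        + (2:ℝ) ^ (1-2*α) * (2:ℝ) ^ (2*α-γ) / (γ-2*α)) * u ^ (2*α-γ)) := by
  have hβ : (-1:ℝ) < 2*α - 1 := by linarith
  have hβ0 : 2*α - 1 ≤ 0 := by linarith
  have hu2 : 0 < u/2 := by linarith
  have hsub : Ioc (0:ℝ) T ⊆ Ioc 0 (u/2) ∪ (Ioc (u/2) (2*u) ∪ Ioi (2*u)) := by
    intro v hv
    rcases le_or_gt v (u/2) with h | h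
    · exact Or.inl ⟨hv.1, h⟩
    rcases le_or_gt v (2*u) with h2 | h2
    · exact Or.inr (Or.inl ⟨h, h2⟩)
    · exact Or.inr (Or.inr h2)
  -- region A
  have hA : ∫⁻ v in Ioc (0:ℝ) (u/2), ENNReal.ofReal (v ^ (-γ) * |u - v| ^ (2*α - 1)) ≤
      ENNReal.ofReal (((1:ℝ)/2) ^ (2*α-γ) / (1-γ) * u ^ (2*α-γ)) := by
    have step1 : ∫⁻ v in Ioc (0:ℝ) (u/2), ENNReal.ofReal (v ^ (-γ) * |u - v| ^ (2*α - 1)) ≤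
        ∫⁻ v in Ioc (0:ℝ) (u/2), ENNReal.ofReal ((u/2) ^ (2*α-1)) * ENNReal.ofReal (v ^ (-γ)) := by
      apply lintegral_mono_ae
      filter_upwards [ae_restrict_mem measurableSet_Ioc] with v hv
      rw [← ENNReal.ofReal_mul (Real.rpow_nonneg hu2.le _)]
      apply ENNReal.ofReal_le_ofReal
      have h1 : |u - v| = u - v := abs_of_pos (by linarith [hv.2])
      have h3 : |u - v| ^ (2*α-1) ≤ (u/2) ^ (2*α-1) := by
        rw [h1]; exact Real.rpow_le_rpow_of_nonpos hu2 (by linarith [hv.2]) hβ0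
      rw [mul_comm ((u/2) ^ (2*α-1)) _]
      exact mul_le_mul_of_nonneg_left h3 (Real.rpow_nonneg hv.1.le _)
    rw [lintegral_const_mul' _ _ ENNReal.ofReal_ne_top, lint_Ioc_rpow_aux (by linarith) hu2.le]
      at step1
    refine step1.trans (le_of_eq ?_)
    rw [← ENNReal.ofReal_mul (Real.rpow_nonneg hu2.le _)]
    congr 1
    have e1 : (u/2) ^ (2*α-1) * ((u/2) ^ (-γ+1) / (-γ+1)) = (u/2) ^ (2*α-γ) / (1-γ) := by
      rw [mul_div_assoc']
      rw [← Real.rpow_add hu2]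
      ring_nf
    rw [e1, show u/2 = u * (1/2) by ring, Real.mul_rpow hu.le (by norm_num)]
    ring
  have hB := hB_aux hα hγl hγu hu (hB1_aux hα hαh hu) (hB2_aux hα hαh hu)
  have hC := hC_aux (α := α) (γ := γ) hα hαh hγl hu
  calc ∫⁻ v in Set.Ioc (0:ℝ) T, ENNReal.ofReal (v ^ (-γ) * |u - v| ^ (2*α - 1))
      ≤ ∫⁻ v in Ioc (0:ℝ) (u/2) ∪ (Ioc (u/2) (2*u) ∪ Ioi (2*u)),
          ENNReal.ofReal (v ^ (-γ) * |u - v| ^ (2*α - 1)) := lintegral_mono_set hsub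
    _ ≤ (∫⁻ v in Ioc (0:ℝ) (u/2), ENNReal.ofReal (v ^ (-γ) * |u - v| ^ (2*α - 1)))
        + ((∫⁻ v in Ioc (u/2) (2*u), ENNReal.ofReal (v ^ (-γ) * |u - v| ^ (2*α - 1)))
          + ∫⁻ v in Ioi (2*u), ENNReal.ofReal (v ^ (-γ) * |u - v| ^ (2*α - 1))) := by
        refine (lintegral_union_le _ _ _).trans ?_
        exact add_le_add le_rfl (lintegral_union_le _ _ _)
    _ ≤ ENNReal.ofReal (((1:ℝ)/2) ^ (2*α-γ) / (1-γ) * u ^ (2*α-γ))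
        + (ENNReal.ofReal (((1:ℝ)/2) ^ (-γ) / α * u ^ (2*α-γ))
          + ENNReal.ofReal ((2:ℝ)^(1-2*α) * (2:ℝ)^(2*α-γ) / (γ-2*α) * u ^ (2*α-γ))) :=
        add_le_add hA (add_le_add hB hC)
    _ = ENNReal.ofReal ((((1:ℝ)/2) ^ (2*α-γ) / (1-γ) + ((1:ℝ)/2) ^ (-γ) / α
        + (2:ℝ) ^ (1-2*α) * (2:ℝ) ^ (2*α-γ) / (γ-2*α)) * u ^ (2*α-γ)) := by
        have n1 : 0 ≤ ((1:ℝ)/2) ^ (-γ) / α * u ^ (2*α-γ) := by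
          apply mul_nonneg (div_nonneg (Real.rpow_nonneg (by norm_num) _) hα.le)
            (Real.rpow_nonneg hu.le _)
        have n2 : 0 ≤ (2:ℝ)^(1-2*α) * (2:ℝ)^(2*α-γ) / (γ-2*α) * u ^ (2*α-γ) := by
          apply mul_nonneg (div_nonneg (mul_nonneg (Real.rpow_nonneg (by norm_num) _)
            (Real.rpow_nonneg (by norm_num) _)) (by linarith)) (Real.rpow_nonneg hu.le _)
        rw [← ENNReal.ofReal_add n1 n2, ← ENNReal.ofReal_add (by
          apply mul_nonneg (div_nonneg (Real.rpow_nonneg (by norm_num) _) (by linarith))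
            (Real.rpow_nonneg hu.le _)) (by positivity)]
        congr 1
        ring


/-- The Hilbert–Schmidt norm of an operator `T : U →L[ℝ] V`, computed in a Hilbert basis
`b` of `U`: `‖T‖_HS = (∑ i, ‖T (b i)‖²)^(1/2)`. -/
noncomputable def hsNorm {U V ι : Type*}
    [NormedAddCommGroup U] [InnerProductSpace ℝ U]
    [NormedAddCommGroup V] [InnerProductSpace ℝ V]
    (b : HilbertBasis ι ℝ U) (T : U →L[ℝ] V) : ℝ :=
  (∑' i, ‖T (b i)‖ ^ 2) ^ ((1 : ℝ) / 2)

/-- if `S(r)Φ` is Hilbert–Schmidt for `r > 0` with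
`∫₀^∞ ‖S(r)Φ‖_HS^{2/(1+2α)} dr < ∞`, then for every `T > 0` the double integral
`∫₀^T∫₀^T ‖S(u)Φ‖_HS ‖S(v)Φ‖_HS |u-v|^{2α-1} du dv` is finite. -/
theorem stmt_10 {U V ι : Type*}
    [NormedAddCommGroup U] [InnerProductSpace ℝ U] [CompleteSpace U]
    [NormedAddCommGroup V] [InnerProductSpace ℝ V] [CompleteSpace V]
    (b : HilbertBasis ι ℝ U)
    (α : ℝ) (hα : α ∈ Set.Ioo (0 : ℝ) (1/2))
    (S : ℝ → V →L[ℝ] V) (Φ : U →L[ℝ] V)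
    (hS0 : S 0 = 1)
    (hSadd : ∀ s t : ℝ, 0 ≤ s → 0 ≤ t → S (s + t) = (S s).comp (S t))
    (hScont : ∀ x : V, ContinuousOn (fun t => S t x) (Set.Ici 0))
    (hHS : ∀ r : ℝ, 0 < r → Summable (fun i => ‖((S r).comp Φ) (b i)‖ ^ 2))
    (hint : MeasureTheory.IntegrableOn
      (fun r => hsNorm b ((S r).comp Φ) ^ (2 / (1 + 2*α))) (Set.Ioi (0:ℝ))) :
    ∀ T : ℝ, 0 < T →
      MeasureTheory.IntegrableOn
        (fun p : ℝ × ℝ =>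
          hsNorm b ((S p.1).comp Φ) * hsNorm b ((S p.2).comp Φ) * |p.1 - p.2| ^ (2*α - 1))
        (Set.Ioc 0 T ×ˢ Set.Ioc 0 T) := by
  obtain ⟨hα0, hα2⟩ := hα
  intro T hT
  set f : ℝ → ℝ := fun r => hsNorm b ((S r).comp Φ) with hf_def
  set q : ℝ := 2 / (1 + 2*α) with hq_def
  have h2a : (0:ℝ) < 1 + 2*α := by linarith
  have hq0 : 0 < q := by positivity
  have hq_ne : q ≠ 0 := hq0.ne'
  have hq2 : q * (1 + 2*α) = 2 := by rw [hq_def, div_mul_cancel₀ _ h2a.ne']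
  have hf0 : ∀ r, 0 ≤ f r := fun r =>
    Real.rpow_nonneg (tsum_nonneg fun i => sq_nonneg _) _
  -- quasi-monotonicity
  have hquasi : ∀ s u : ℝ, 0 < s → s ≤ u → f u ≤ ‖S (u - s)‖ * f s := by
    intro s u hs hsu
    have hSu : S u = (S (u - s)).comp (S s) := by
      have h := hSadd (u - s) s (by linarith) hs.le
      rwa [sub_add_cancel] at h
    have hle : ∀ i, ‖((S u).comp Φ) (b i)‖ ^ 2 ≤
        ‖S (u - s)‖ ^ 2 * ‖((S s).comp Φ) (b i)‖ ^ 2 := by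
      intro i
      have he : ((S u).comp Φ) (b i) = S (u - s) (((S s).comp Φ) (b i)) := by
        rw [hSu]; rfl
      rw [he, ← mul_pow]
      exact pow_le_pow_left₀ (norm_nonneg _) ((S (u - s)).le_opNorm _) 2
    have hts : ∑' i, ‖((S u).comp Φ) (b i)‖ ^ 2 ≤
        ‖S (u - s)‖ ^ 2 * ∑' i, ‖((S s).comp Φ) (b i)‖ ^ 2 := by
      rw [← tsum_mul_left]
      exact Summable.tsum_le_tsum hle (hHS u (by linarith)) ((hHS s hs).mul_left _)
    show (∑' i, ‖((S u).comp Φ) (b i)‖ ^ 2) ^ ((1:ℝ)/2) ≤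
      ‖S (u - s)‖ * (∑' i, ‖((S s).comp Φ) (b i)‖ ^ 2) ^ ((1:ℝ)/2)
    calc (∑' i, ‖((S u).comp Φ) (b i)‖ ^ 2) ^ ((1:ℝ)/2)
        ≤ (‖S (u - s)‖ ^ 2 * ∑' i, ‖((S s).comp Φ) (b i)‖ ^ 2) ^ ((1:ℝ)/2) :=
          Real.rpow_le_rpow (tsum_nonneg fun i => sq_nonneg _) hts (by norm_num)
      _ = (‖S (u - s)‖ ^ 2) ^ ((1:ℝ)/2) * (∑' i, ‖((S s).comp Φ) (b i)‖ ^ 2) ^ ((1:ℝ)/2) :=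
          Real.mul_rpow (sq_nonneg _) (tsum_nonneg fun i => sq_nonneg _)
      _ = ‖S (u - s)‖ * (∑' i, ‖((S s).comp Φ) (b i)‖ ^ 2) ^ ((1:ℝ)/2) := by
          rw [← Real.rpow_natCast ‖S (u - s)‖ 2, ← Real.rpow_mul (norm_nonneg _)]
          norm_num
  -- uniform bound on the semigroup on [0,T]
  obtain ⟨M, hM⟩ : ∃ M, ∀ t : Icc (0:ℝ) T, ‖S t‖ ≤ M := by
    apply banach_steinhaus
    intro x
    obtain ⟨C, hC⟩ := (isCompact_Icc (a := (0:ℝ)) (b := T)).exists_bound_of_continuousOn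
      ((hScont x).mono Icc_subset_Ici_self)
    exact ⟨C, fun t => hC t t.2⟩
  set Mp : ℝ := max M 1 with hMp_def
  have hMp0 : 0 < Mp := lt_of_lt_of_le one_pos (le_max_right _ _)
  have hquasiT : ∀ s u : ℝ, 0 < s → s ≤ u → u ≤ T → f u ≤ Mp * f s := by
    intro s u hs hsu huT
    refine (hquasi s u hs hsu).trans (mul_le_mul_of_nonneg_right ?_ (hf0 s))
    exact (hM ⟨u - s, ⟨by linarith, by linarith⟩⟩).trans (le_max_left _ _)
  -- pointwise bound f x ^ q ≤ D / x
  set C₀ : ℝ := ∫ r in Ioi (0:ℝ), f r ^ q with hC₀_def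
  have hC₀0 : 0 ≤ C₀ :=
    setIntegral_nonneg measurableSet_Ioi fun r _ => Real.rpow_nonneg (hf0 r) q
  set D : ℝ := Mp ^ q * C₀ with hD_def
  have hD0 : 0 ≤ D := mul_nonneg (Real.rpow_nonneg hMp0.le _) hC₀0
  have hKey : ∀ x ∈ Ioc (0:ℝ) T, f x ^ q ≤ D / x := by
    intro x hx
    have hsub : Ioc (0:ℝ) x ⊆ Ioi (0:ℝ) := fun s hs => hs.1
    have h1 : ∀ s ∈ Ioc (0:ℝ) x, f x ^ q ≤ Mp ^ q * f s ^ q := by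
      intro s hs
      calc f x ^ q ≤ (Mp * f s) ^ q :=
            Real.rpow_le_rpow (hf0 x) (hquasiT s x hs.1 hs.2 hx.2) hq0.le
        _ = Mp ^ q * f s ^ q := Real.mul_rpow hMp0.le (hf0 s)
    have h4 : ∫ _ in Ioc (0:ℝ) x, f x ^ q ≤ ∫ s in Ioc (0:ℝ) x, Mp ^ q * f s ^ q := by
      apply setIntegral_mono_on
      · exact integrableOn_const (by rw [Real.volume_Ioc]; exact ENNReal.ofReal_ne_top)
      · exact (hint.mono_set hsub).const_mul _
      · exact measurableSet_Ioc
      · exact h1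
    have h3 : ∫ _ in Ioc (0:ℝ) x, f x ^ q = x * f x ^ q := by
      rw [setIntegral_const, measureReal_def, Real.volume_Ioc, smul_eq_mul, sub_zero,
        ENNReal.toReal_ofReal hx.1.le]
    have h5 : ∫ s in Ioc (0:ℝ) x, Mp ^ q * f s ^ q = Mp ^ q * ∫ s in Ioc (0:ℝ) x, f s ^ q :=
      integral_const_mul _ _
    have h6 : ∫ s in Ioc (0:ℝ) x, f s ^ q ≤ C₀ := by
      apply setIntegral_mono_set hint
      · exact ae_of_all _ fun s => Real.rpow_nonneg (hf0 s) q
      · exact HasSubset.Subset.eventuallyLE hsub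
    rw [le_div_iff₀ hx.1]
    have h7 : Mp ^ q * ∫ s in Ioc (0:ℝ) x, f s ^ q ≤ Mp ^ q * C₀ :=
      mul_le_mul_of_nonneg_left h6 (Real.rpow_nonneg hMp0.le _)
    rw [h3, h5] at h4
    rw [mul_comm]
    calc x * f x ^ q ≤ Mp ^ q * C₀ := by linarith
      _ = D := rfl
  set D2 : ℝ := D ^ (2*α) with hD2_def
  have hD20 : 0 ≤ D2 := Real.rpow_nonneg hD0 _
  have hE : ∀ x ∈ Ioc (0:ℝ) T, f x ^ 2 * x ^ (2*α) ≤ D2 * f x ^ q := by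
    intro x hx
    rcases eq_or_lt_of_le (hf0 x) with hfx | hfx
    · rw [← hfx, Real.zero_rpow hq_ne]
      norm_num
    · have e1 : f x ^ (2:ℕ) = f x ^ q * (f x ^ q) ^ (2*α) := by
        have e0 : ((2:ℕ):ℝ) = q + q * (2*α) := by
          rw [show q + q * (2*α) = q * (1 + 2*α) by ring, hq2]; norm_num
        rw [← Real.rpow_natCast (f x) 2, e0, Real.rpow_add hfx, Real.rpow_mul (hf0 x)]
      have e2 : (f x ^ q) ^ (2*α) ≤ (D / x) ^ (2*α) :=
        Real.rpow_le_rpow (Real.rpow_nonneg (hf0 x) q) (hKey x hx) (by linarith)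
      have e3 : (D / x) ^ (2*α) * x ^ (2*α) = D2 := by
        rw [Real.div_rpow hD0 hx.1.le, div_mul_cancel₀]
        exact (Real.rpow_pos_of_pos hx.1 _).ne'
      calc f x ^ 2 * x ^ (2*α) = f x ^ q * ((f x ^ q) ^ (2*α) * x ^ (2*α)) := by
            rw [e1]; ring
        _ ≤ f x ^ q * ((D / x) ^ (2*α) * x ^ (2*α)) := by
            apply mul_le_mul_of_nonneg_left ?_ (Real.rpow_nonneg (hf0 x) q)
            exact mul_le_mul_of_nonneg_right e2 (Real.rpow_nonneg hx.1.le _)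
        _ = D2 * f x ^ q := by rw [e3]; ring
  -- measurability of f
  set μ : Measure ℝ := volume.restrict (Ioc (0:ℝ) T) with hμ_def
  have hfaem : AEMeasurable f μ := by
    have h1 : AEStronglyMeasurable (fun r => f r ^ q) μ :=
      hint.1.mono_measure (Measure.restrict_mono (fun s hs => hs.1) le_rfl)
    have h2 : AEMeasurable (fun r => (f r ^ q) ^ q⁻¹) μ :=
      ((Real.continuous_rpow_const (inv_nonneg.2 hq0.le)).measurable).comp_aemeasurable
        h1.aemeasurable
    have h3 : (fun r => (f r ^ q) ^ q⁻¹) = f := by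
      funext r
      rw [← Real.rpow_mul (hf0 r), mul_inv_cancel₀ hq_ne, Real.rpow_one]
    rwa [h3] at h2
  set γ : ℝ := α + 1/2 with hγ_def
  have hγl : 2*α < γ := by rw [hγ_def]; linarith
  have hγu : γ < 1 := by rw [hγ_def]; linarith
  set Cst : ℝ := ((1:ℝ)/2) ^ (2*α-γ) / (1-γ) + ((1:ℝ)/2) ^ (-γ) / α
        + (2:ℝ) ^ (1-2*α) * (2:ℝ) ^ (2*α-γ) / (γ-2*α) with hCst_def
  have hCst0 : 0 ≤ Cst := by
    have n1 : 0 ≤ ((1:ℝ)/2) ^ (2*α-γ) / (1-γ) :=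
      div_nonneg (Real.rpow_nonneg (by norm_num) _) (by linarith)
    have n2 : 0 ≤ ((1:ℝ)/2) ^ (-γ) / α :=
      div_nonneg (Real.rpow_nonneg (by norm_num) _) hα0.le
    have n3 : 0 ≤ (2:ℝ) ^ (1-2*α) * (2:ℝ) ^ (2*α-γ) / (γ-2*α) :=
      div_nonneg (mul_nonneg (Real.rpow_nonneg (by norm_num) _)
        (Real.rpow_nonneg (by norm_num) _)) (by linarith)
    rw [hCst_def]; linarith
  have hfinq : ∫⁻ x, ENNReal.ofReal (f x ^ q) ∂μ < ⊤ := by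
    have h1 : IntegrableOn (fun r => f r ^ q) (Ioc 0 T) volume :=
      hint.mono_set Ioc_subset_Ioi_self
    have h2 := h1.2
    rwa [hasFiniteIntegral_iff_ofReal
      (ae_of_all _ fun r => Real.rpow_nonneg (hf0 r) q)] at h2
  -- key one-sided iterated bound
  have key : (∫⁻ x in Ioc (0:ℝ) T, ∫⁻ y in Ioc (0:ℝ) T,
      ENNReal.ofReal ((f x ^ 2 * x ^ γ) * (y ^ (-γ) * |x - y| ^ (2*α-1)))) < ⊤ := by
    have step1 : (∫⁻ x in Ioc (0:ℝ) T, ∫⁻ y in Ioc (0:ℝ) T,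
        ENNReal.ofReal ((f x ^ 2 * x ^ γ) * (y ^ (-γ) * |x - y| ^ (2*α-1))))
        ≤ ∫⁻ x in Ioc (0:ℝ) T, ENNReal.ofReal (Cst * D2 * f x ^ q) := by
      apply lintegral_mono_ae
      filter_upwards [ae_restrict_mem measurableSet_Ioc] with x hx
      have hx0 : 0 < x := hx.1
      have hnn : 0 ≤ f x ^ 2 * x ^ γ := mul_nonneg (sq_nonneg _) (Real.rpow_nonneg hx0.le _)
      calc ∫⁻ y in Ioc (0:ℝ) T, ENNReal.ofReal ((f x ^ 2 * x ^ γ) * (y ^ (-γ) * |x - y| ^ (2*α-1)))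
          = ENNReal.ofReal (f x ^ 2 * x ^ γ)
            * ∫⁻ y in Ioc (0:ℝ) T, ENNReal.ofReal (y ^ (-γ) * |x - y| ^ (2*α-1)) := by
            simp_rw [ENNReal.ofReal_mul hnn]
            exact lintegral_const_mul' _ _ ENNReal.ofReal_ne_top
        _ ≤ ENNReal.ofReal (f x ^ 2 * x ^ γ) * ENNReal.ofReal (Cst * x ^ (2*α-γ)) :=
            mul_le_mul_right (kernel_aux α γ T x hα0 hα2 hγl hγu hx0) _
        _ = ENNReal.ofReal ((f x ^ 2 * x ^ γ) * (Cst * x ^ (2*α-γ))) :=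
            (ENNReal.ofReal_mul hnn).symm
        _ ≤ ENNReal.ofReal (Cst * D2 * f x ^ q) := by
            apply ENNReal.ofReal_le_ofReal
            have e4 : x ^ γ * x ^ (2*α-γ) = x ^ (2*α) := by
              rw [← Real.rpow_add hx0]; ring_nf
            calc (f x ^ 2 * x ^ γ) * (Cst * x ^ (2*α-γ))
                = Cst * (f x ^ 2 * (x ^ γ * x ^ (2*α-γ))) := by ring
              _ = Cst * (f x ^ 2 * x ^ (2*α)) := by rw [e4]
              _ ≤ Cst * (D2 * f x ^ q) := mul_le_mul_of_nonneg_left (hE x hx) hCst0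
              _ = Cst * D2 * f x ^ q := by ring
    refine lt_of_le_of_lt step1 ?_
    have heq : (∫⁻ x in Ioc (0:ℝ) T, ENNReal.ofReal (Cst * D2 * f x ^ q))
        = ENNReal.ofReal (Cst * D2) * ∫⁻ x in Ioc (0:ℝ) T, ENNReal.ofReal (f x ^ q) := by
      simp_rw [ENNReal.ofReal_mul (mul_nonneg hCst0 hD20)]
      exact lintegral_const_mul' _ _ ENNReal.ofReal_ne_top
    rw [heq]
    exact ENNReal.mul_lt_top ENNReal.ofReal_lt_top hfinq
  -- assemble
  have hgoalEq : (volume : Measure (ℝ×ℝ)).restrict (Ioc 0 T ×ˢ Ioc 0 T) = μ.prod μ := by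
    rw [hμ_def, Measure.prod_restrict, ← Measure.volume_eq_prod]
  rw [IntegrableOn, hgoalEq]
  have hmfst : AEMeasurable (fun p : ℝ × ℝ => f p.1) (μ.prod μ) :=
    hfaem.comp_quasiMeasurePreserving Measure.quasiMeasurePreserving_fst
  have hmsnd : AEMeasurable (fun p : ℝ × ℝ => f p.2) (μ.prod μ) :=
    hfaem.comp_quasiMeasurePreserving Measure.quasiMeasurePreserving_snd
  have hmker : Measurable (fun p : ℝ × ℝ => |p.1 - p.2| ^ (2*α - 1)) :=
    ((measurable_fst.sub measurable_snd).abs).pow measurable_const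
  have hGaem : AEMeasurable
      (fun p : ℝ×ℝ => f p.1 * f p.2 * |p.1 - p.2| ^ (2*α - 1)) (μ.prod μ) :=
    (hmfst.mul hmsnd).mul hmker.aemeasurable
  have hGnn : ∀ p : ℝ×ℝ, 0 ≤ f p.1 * f p.2 * |p.1 - p.2| ^ (2*α - 1) := fun p =>
    mul_nonneg (mul_nonneg (hf0 _) (hf0 _)) (Real.rpow_nonneg (abs_nonneg _) _)
  refine ⟨hGaem.aestronglyMeasurable, ?_⟩
  rw [hasFiniteIntegral_iff_ofReal (ae_of_all _ hGnn)]
  set G1 : ℝ×ℝ → ℝ≥0∞ := fun p =>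
    ENNReal.ofReal ((f p.1 ^ 2 * p.1 ^ γ) * (p.2 ^ (-γ) * |p.1 - p.2| ^ (2*α-1))) with hG1_def
  set G2 : ℝ×ℝ → ℝ≥0∞ := fun p =>
    ENNReal.ofReal ((f p.2 ^ 2 * p.2 ^ γ) * (p.1 ^ (-γ) * |p.1 - p.2| ^ (2*α-1))) with hG2_def
  have hG1m : AEMeasurable G1 (μ.prod μ) := by
    apply ENNReal.measurable_ofReal.comp_aemeasurable
    exact ((hmfst.pow_const 2).mul ((measurable_fst.pow measurable_const).aemeasurable)).mul
      (((measurable_snd.pow measurable_const).mul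
        (((measurable_fst.sub measurable_snd).abs).pow measurable_const)).aemeasurable)
  have hG2m : AEMeasurable G2 (μ.prod μ) := by
    apply ENNReal.measurable_ofReal.comp_aemeasurable
    exact ((hmsnd.pow_const 2).mul ((measurable_snd.pow measurable_const).aemeasurable)).mul
      (((measurable_fst.pow measurable_const).mul
        (((measurable_fst.sub measurable_snd).abs).pow measurable_const)).aemeasurable)
  have hae : ∀ᵐ p ∂(μ.prod μ), p ∈ Ioc (0:ℝ) T ×ˢ Ioc (0:ℝ) T := by
    rw [hμ_def, Measure.prod_restrict]
    exact ae_restrict_mem (measurableSet_Ioc.prod measurableSet_Ioc)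
  have hptwise : ∀ᵐ p ∂(μ.prod μ),
      ENNReal.ofReal (f p.1 * f p.2 * |p.1 - p.2| ^ (2*α - 1)) ≤ G1 p + G2 p := by
    filter_upwards [hae] with p hp
    obtain ⟨hp1, hp2⟩ := hp
    have hu0 : (0:ℝ) < p.1 := hp1.1
    have hv0 : (0:ℝ) < p.2 := hp2.1
    have hK0 : 0 ≤ |p.1 - p.2| ^ (2*α - 1) := Real.rpow_nonneg (abs_nonneg _) _
    have hc : 0 < p.1 ^ γ * p.2 ^ (-γ) :=
      mul_pos (Real.rpow_pos_of_pos hu0 _) (Real.rpow_pos_of_pos hv0 _)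
    have hinv : (p.1 ^ γ * p.2 ^ (-γ))⁻¹ = p.2 ^ γ * p.1 ^ (-γ) := by
      rw [mul_inv, ← Real.rpow_neg hu0.le, ← Real.rpow_neg hv0.le, neg_neg, mul_comm]
    have ham := amgm_aux (f p.1) (f p.2) _ hc
    rw [hinv] at ham
    have hX0 : 0 ≤ (f p.1 ^ 2 * p.1 ^ γ) * (p.2 ^ (-γ) * |p.1 - p.2| ^ (2*α-1)) := by
      have := Real.rpow_nonneg hu0.le γ
      have := Real.rpow_nonneg hv0.le (-γ)
      positivity
    have hY0 : 0 ≤ (f p.2 ^ 2 * p.2 ^ γ) * (p.1 ^ (-γ) * |p.1 - p.2| ^ (2*α-1)) := by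
      positivity
    have hreal : f p.1 * f p.2 * |p.1 - p.2| ^ (2*α - 1) ≤
        (f p.1 ^ 2 * p.1 ^ γ) * (p.2 ^ (-γ) * |p.1 - p.2| ^ (2*α-1))
        + (f p.2 ^ 2 * p.2 ^ γ) * (p.1 ^ (-γ) * |p.1 - p.2| ^ (2*α-1)) := by
      have hsum0 : 0 ≤ f p.1 ^ 2 * (p.1 ^ γ * p.2 ^ (-γ))
          + f p.2 ^ 2 * (p.2 ^ γ * p.1 ^ (-γ)) := by positivity
      have h1 := mul_le_mul_of_nonneg_right ham hK0
      have h2 : ((f p.1 ^ 2 * (p.1 ^ γ * p.2 ^ (-γ))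
            + f p.2 ^ 2 * (p.2 ^ γ * p.1 ^ (-γ)))/2) * |p.1 - p.2| ^ (2*α - 1)
          ≤ (f p.1 ^ 2 * (p.1 ^ γ * p.2 ^ (-γ))
            + f p.2 ^ 2 * (p.2 ^ γ * p.1 ^ (-γ))) * |p.1 - p.2| ^ (2*α - 1) :=
        mul_le_mul_of_nonneg_right (by linarith) hK0
      calc f p.1 * f p.2 * |p.1 - p.2| ^ (2*α - 1)
          ≤ (f p.1 ^ 2 * (p.1 ^ γ * p.2 ^ (-γ))
            + f p.2 ^ 2 * (p.2 ^ γ * p.1 ^ (-γ))) * |p.1 - p.2| ^ (2*α - 1) := h1.trans h2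
        _ = (f p.1 ^ 2 * p.1 ^ γ) * (p.2 ^ (-γ) * |p.1 - p.2| ^ (2*α-1))
            + (f p.2 ^ 2 * p.2 ^ γ) * (p.1 ^ (-γ) * |p.1 - p.2| ^ (2*α-1)) := by ring
    calc ENNReal.ofReal (f p.1 * f p.2 * |p.1 - p.2| ^ (2*α - 1))
        ≤ ENNReal.ofReal ((f p.1 ^ 2 * p.1 ^ γ) * (p.2 ^ (-γ) * |p.1 - p.2| ^ (2*α-1))
          + (f p.2 ^ 2 * p.2 ^ γ) * (p.1 ^ (-γ) * |p.1 - p.2| ^ (2*α-1))) :=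
          ENNReal.ofReal_le_ofReal hreal
      _ = G1 p + G2 p := ENNReal.ofReal_add hX0 hY0
  calc ∫⁻ p, ENNReal.ofReal (f p.1 * f p.2 * |p.1 - p.2| ^ (2*α - 1)) ∂(μ.prod μ)
      ≤ ∫⁻ p, (G1 p + G2 p) ∂(μ.prod μ) := lintegral_mono_ae hptwise
    _ = (∫⁻ p, G1 p ∂(μ.prod μ)) + ∫⁻ p, G2 p ∂(μ.prod μ) := lintegral_add_left' hG1m _
    _ < ⊤ := by
      have e1 : ∫⁻ p, G1 p ∂(μ.prod μ) = ∫⁻ x in Ioc (0:ℝ) T, ∫⁻ y in Ioc (0:ℝ) T,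
          ENNReal.ofReal ((f x ^ 2 * x ^ γ) * (y ^ (-γ) * |x - y| ^ (2*α-1))) :=
        lintegral_prod _ hG1m
      have e2 : ∫⁻ p, G2 p ∂(μ.prod μ) = ∫⁻ y in Ioc (0:ℝ) T, ∫⁻ x in Ioc (0:ℝ) T,
          ENNReal.ofReal ((f y ^ 2 * y ^ γ) * (x ^ (-γ) * |x - y| ^ (2*α-1))) :=
        lintegral_prod_symm _ hG2m
      have e3' : ∀ yy : ℝ, (∫⁻ x in Ioc (0:ℝ) T,
          ENNReal.ofReal ((f yy ^ 2 * yy ^ γ) * (x ^ (-γ) * |x - yy| ^ (2*α-1))))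
          = ∫⁻ x in Ioc (0:ℝ) T,
          ENNReal.ofReal ((f yy ^ 2 * yy ^ γ) * (x ^ (-γ) * |yy - x| ^ (2*α-1))) := by
        intro yy
        apply lintegral_congr
        intro x
        rw [abs_sub_comm]
      have e3 : (∫⁻ y in Ioc (0:ℝ) T, ∫⁻ x in Ioc (0:ℝ) T,
          ENNReal.ofReal ((f y ^ 2 * y ^ γ) * (x ^ (-γ) * |x - y| ^ (2*α-1))))
          = ∫⁻ x in Ioc (0:ℝ) T, ∫⁻ y in Ioc (0:ℝ) T,
          ENNReal.ofReal ((f x ^ 2 * x ^ γ) * (y ^ (-γ) * |x - y| ^ (2*α-1))) := by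
        simp_rw [e3']
      rw [e1, e2, e3]
      exact ENNReal.add_lt_top.mpr ⟨key, key⟩
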